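/- For all β > 1 and n ≥ 1, the number of β-admissible words of length n satisfies β^n ≤ #Σ_β^n ≤ β^{n+1}/(β-1). -/

import Mathlib

open Filter Topology

/-- The β-transformation `T_β x = βx - ⌊βx⌋`. -/
noncomputable def Tb (β : ℝ) (x : ℝ) : ℝ := β * x - ⌊β * x⌋

/-- The (n+1)-st digit `ε_{n+1}(x, β) = ⌊β T_β^{n} x⌋` of the β-expansion of `x`. -/
noncomputable def digit (β : ℝ) (x : ℝ) (n : ℕ) : ℕ := (⌊β * (Tb β)^[n] x⌋).toNat

/-- Strict lexicographical order on sequences of naturals. -/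
def lexLt (a b : ℕ → ℕ) : Prop := ∃ k, (∀ j, j < k → a j = b j) ∧ a k < b k

def lexLe (a b : ℕ → ℕ) : Prop := lexLt a b ∨ a = b

/-- A finite word padded with zeros to an infinite sequence. -/
def pad {n : ℕ} (ω : Fin n → ℕ) : ℕ → ℕ := fun k => if h : k < n then ω ⟨k, h⟩ else 0

/-- The prefix of length `m` of a padded word, again padded with zeros. -/
def trunc {n : ℕ} (ω : Fin n → ℕ) (m : ℕ) : ℕ → ℕ := fun k => if k < m then pad ω k else 0

/-- A word `ω` of length `n` is self-admissible if `σ^i ω ≤_lex (ω_1, …, ω_{n-i})`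
for all `1 ≤ i < n` (comparison after padding with zeros). -/
def selfAdmissible {n : ℕ} (ω : Fin n → ℕ) : Prop :=
  ∀ i, 1 ≤ i → i < n → lexLe (fun k => pad ω (k + i)) (trunc ω (n - i))

/-- Lexicographic order on words of the same length. -/
def wordLt {n : ℕ} (ω ω' : Fin n → ℕ) : Prop := lexLt (pad ω) (pad ω')

def wordLe {n : ℕ} (ω ω' : Fin n → ℕ) : Prop := wordLt ω ω' ∨ ω = ω'

/-- The recurrence time `τ(ω)`: the least `1 ≤ k < n` with
`σ^k(ω_1,…,ω_n) = (ω_1,…,ω_{n-k})`, and `n` if there is no such `k`. -/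
noncomputable def tau {n : ℕ} (ω : Fin n → ℕ) : ℕ :=
  sInf ({k | 1 ≤ k ∧ k < n ∧ ∀ j, j < n - k → pad ω (k + j) = pad ω j} ∪ {n})

/-- The cylinder of the word `ω` in the parameter space `(1, ∞)`. -/
def cylP (n : ℕ) (ω : Fin n → ℕ) : Set ℝ := {β : ℝ | 1 < β ∧ ∀ i : Fin n, digit β 1 i = ω i}

/-- The first `n` digits of the β-expansion of `1`. -/
noncomputable def prefixW (β : ℝ) (n : ℕ) : Fin n → ℕ := fun i => digit β 1 i

/-- The `n`-th recurrence time `τ_n(β)` of `β`. -/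
noncomputable def tauN (β : ℝ) (n : ℕ) : ℕ := tau (prefixW β n)

/-- `t_n(β) = n - ⌊n / τ_n(β)⌋ τ_n(β)`. -/
noncomputable def tN (β : ℝ) (n : ℕ) : ℕ := n - (n / tauN β n) * tauN β n

/-- Left endpoint `β̲_n` of the `n`-th cylinder of `β` in the parameter space. -/
noncomputable def lEnd (β : ℝ) (n : ℕ) : ℝ := sInf (cylP n (prefixW β n))

/-- Right endpoint `β̄_n` of the `n`-th cylinder of `β` in the parameter space. -/
noncomputable def rEnd (β : ℝ) (n : ℕ) : ℝ := sSup (cylP n (prefixW β n))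

/-- The set `Σ_β^n` of β-admissible words of length `n`. -/
def SigmaB (β : ℝ) (n : ℕ) : Set (Fin n → ℕ) :=
  {w | ∃ x : ℝ, 0 ≤ x ∧ x < 1 ∧ ∀ i : Fin n, digit β x i = w i}

open Classical in
/-- The infinite β-expansion `ε*(1, β)` of `1`. -/
noncomputable def epsStar (β : ℝ) : ℕ → ℕ :=
  if h : ∃ m, digit β 1 m ≠ 0 ∧ ∀ k, m < k → digit β 1 k = 0 then
    fun n =>
      if n % (h.choose + 1) = h.choose then digit β 1 h.choose - 1
      else digit β 1 (n % (h.choose + 1))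
  else digit β 1


namespace CardAdm

variable {β : ℝ}

lemma Tb_mem (β x : ℝ) : Tb β x ∈ Set.Ico (0:ℝ) 1 := by
  have h : Tb β x = Int.fract (β * x) := rfl
  rw [h]
  exact ⟨Int.fract_nonneg _, Int.fract_lt_one _⟩

lemma iter_mem (β : ℝ) {x : ℝ} (hx : x ∈ Set.Ico (0:ℝ) 1) (n : ℕ) :
    (Tb β)^[n] x ∈ Set.Ico (0:ℝ) 1 := by
  induction n with
  | zero => simpa using hx
  | succ n _ => rw [Function.iterate_succ_apply']; exact Tb_mem β _

lemma digit_int (hβ : 0 < β) {x : ℝ} (hx : x ∈ Set.Ico (0:ℝ) 1) (n : ℕ) :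
    ((digit β x n : ℤ)) = ⌊β * (Tb β)^[n] x⌋ := by
  have h := iter_mem β hx n
  exact Int.toNat_of_nonneg (Int.floor_nonneg.2 (mul_nonneg hβ.le h.1))

lemma digit_real (hβ : 0 < β) {x : ℝ} (hx : x ∈ Set.Ico (0:ℝ) 1) (n : ℕ) :
    ((digit β x n : ℝ)) = (⌊β * (Tb β)^[n] x⌋ : ℤ) := by
  exact_mod_cast congrArg (fun z : ℤ => (z : ℝ)) (digit_int hβ hx n)

lemma digit_le (hβ : 0 < β) {x : ℝ} (hx : x ∈ Set.Ico (0:ℝ) 1) (n : ℕ) :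
    digit β x n ≤ (⌊β⌋).toNat := by
  have h := iter_mem β hx n
  have : ⌊β * (Tb β)^[n] x⌋ ≤ ⌊β⌋ :=
    Int.floor_le_floor (by nlinarith [h.1, h.2])
  exact Int.toNat_le_toNat this

lemma step (hβ : 0 < β) {x : ℝ} (hx : x ∈ Set.Ico (0:ℝ) 1) :
    β * x = (digit β x 0 : ℝ) + Tb β x := by
  have h := digit_real hβ hx 0
  simp only [Function.iterate_zero_apply] at h
  rw [h, Tb]; ring

lemma digit_shift (β x : ℝ) (i : ℕ) : digit β x (i + 1) = digit β (Tb β x) i := by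
  unfold digit
  rw [Function.iterate_succ_apply]

noncomputable def valw (β : ℝ) {n : ℕ} (w : Fin n → ℕ) : ℝ :=
  ∑ i : Fin n, (w i : ℝ) / β ^ ((i : ℕ) + 1)

lemma valw_congr {n : ℕ} {w w' : Fin n → ℕ} (h : ∀ i, w i = w' i) :
    valw β w = valw β w' := by
  unfold valw; exact Finset.sum_congr rfl fun i _ => by rw [h i]

lemma valw_succ {n : ℕ} (w : Fin (n+1) → ℕ) :
    valw β w = ((w 0 : ℝ) + valw β (fun i : Fin n => w i.succ)) / β := by
  unfold valw
  rw [Fin.sum_univ_succ, add_div, Finset.sum_div]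
  congr 1
  · simp
  · refine Finset.sum_congr rfl fun i _ => ?_
    rw [Fin.val_succ, pow_succ, ← div_div]

lemma valw_nonneg {n : ℕ} (hβ : 0 < β) (w : Fin n → ℕ) : 0 ≤ valw β w := by
  apply Finset.sum_nonneg
  intro i _
  positivity

lemma expand (hβ : 0 < β) :
    ∀ (n : ℕ) (x : ℝ), x ∈ Set.Ico (0:ℝ) 1 →
      x = valw β (fun i : Fin n => digit β x i) + (Tb β)^[n] x / β ^ n := by
  intro n
  induction n with
  | zero =>
    intro x hx
    simp [valw]
  | succ n ih =>
    intro x hx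
    have hIH := ih (Tb β x) (Tb_mem β x)
    have hstep := step hβ hx
    have hb : β ≠ 0 := hβ.ne'
    rw [valw_succ]
    have hd : (fun i : Fin n => digit β x (i.succ : ℕ)) = fun i : Fin n => digit β (Tb β x) i := by
      funext i
      rw [Fin.val_succ, digit_shift]
    simp only [Fin.val_zero] at *
    rw [hd, Function.iterate_succ_apply]
    calc x = ((digit β x 0 : ℝ) + Tb β x) / β := by
            field_simp
            linarith [hstep]
    _ = ((digit β x 0 : ℝ) + (valw β (fun i : Fin n => digit β (Tb β x) i)
          + (Tb β)^[n] (Tb β x) / β ^ n)) / β := by rw [← hIH]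
    _ = _ := by
          rw [pow_succ]
          field_simp
          ring

lemma star (hβ : 1 < β) :
    ∀ (n : ℕ) (x t : ℝ), x ∈ Set.Ico (0:ℝ) 1 → 0 ≤ t → t ≤ (Tb β)^[n] x →
    ∀ y : ℝ, y = valw β (fun i : Fin n => digit β x i) + t / β ^ n →
      y ≤ x ∧ 0 ≤ y ∧ (∀ i : ℕ, i < n → digit β y i = digit β x i) ∧ (Tb β)^[n] y = t := by
  have hβ0 : (0:ℝ) < β := lt_trans zero_lt_one hβ
  intro n
  induction n with
  | zero =>
    intro x t hx ht hle y hy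
    simp only [Function.iterate_zero_apply] at hle ⊢
    have : y = t := by rw [hy]; simp [valw]
    subst this
    exact ⟨hle, ht, fun i hi => absurd hi (Nat.not_lt_zero i), rfl⟩
  | succ n ih =>
    intro x t hx ht hle y hy
    set x1 := Tb β x with hx1def
    have hx1 : x1 ∈ Set.Ico (0:ℝ) 1 := Tb_mem β x
    rw [Function.iterate_succ_apply] at hle
    set y1 := valw β (fun i : Fin n => digit β x1 i) + t / β ^ n with hy1def
    obtain ⟨hy1le, hy1nn, hy1dig, hy1T⟩ := ih x1 t hx1 ht hle y1 rfl
    have hy1lt : y1 < 1 := lt_of_le_of_lt hy1le hx1.2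
    set d0 : ℕ := digit β x 0 with hd0
    have hyform : y = ((d0 : ℝ) + y1) / β := by
      rw [hy, valw_succ]
      have hd : (fun i : Fin n => digit β x (i.succ : ℕ)) = fun i : Fin n => digit β x1 i := by
        funext i
        rw [Fin.val_succ, digit_shift]
      simp only [Fin.val_zero, hd]
      rw [hy1def, pow_succ]
      field_simp
      ring
    have hby : β * y = (d0 : ℝ) + y1 := by
      rw [hyform]; field_simp
    have hfloor : ⌊β * y⌋ = (d0 : ℤ) := by
      rw [hby]
      rw [Int.floor_eq_iff]
      constructor
      · push_cast; linarith
      · push_cast; linarith [hy1lt]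
    have hTy : Tb β y = y1 := by
      rw [Tb, hfloor, hby]; push_cast; ring
    have hdig0 : digit β y 0 = d0 := by
      unfold digit
      simp only [Function.iterate_zero_apply]
      rw [hfloor]; rfl
    have hxform : x = ((d0 : ℝ) + x1) / β := by
      have := step hβ0 hx
      rw [hx1def]
      field_simp
      linarith [this]
    refine ⟨?_, ?_, ?_, ?_⟩
    · rw [hyform, hxform]
      apply (div_le_div_iff_of_pos_right hβ0).2
      linarith
    · rw [hyform]; positivity
    · intro i hi
      match i with
      | 0 => exact hdig0
      | (j+1) =>
        rw [digit_shift, hTy, hy1dig j (by omega), ← digit_shift]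
    · rw [Function.iterate_succ_apply, hTy, hy1T]

lemma finite_SigmaB (hβ : 1 < β) (n : ℕ) : (SigmaB β n).Finite := by
  have hβ0 : (0:ℝ) < β := lt_trans zero_lt_one hβ
  have hsub : SigmaB β n ⊆ Set.pi Set.univ (fun _ : Fin n => Set.Iic ((⌊β⌋).toNat)) := by
    rintro w ⟨x, hx0, hx1, hw⟩
    intro i _
    simp only [Set.mem_Iic]
    rw [← hw i]
    exact digit_le hβ0 ⟨hx0, hx1⟩ i
  exact (Set.Finite.pi fun _ => Set.finite_Iic _).subset hsub

lemma lower (hβ : 1 < β) (n : ℕ) : β ^ n ≤ ((SigmaB β n).ncard : ℝ) := by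
  classical
  have hβ0 : (0:ℝ) < β := lt_trans zero_lt_one hβ
  have hβn : (0:ℝ) < β ^ n := pow_pos hβ0 n
  have hfin := finite_SigmaB hβ n
  set F := hfin.toFinset with hF
  have hcover : Set.Ico (0:ℝ) 1 ⊆ ⋃ w ∈ F, Set.Ico (valw β w) (valw β w + 1 / β ^ n) := by
    intro x hx
    have hexp := expand hβ0 n x hx
    have hT := iter_mem β hx n
    refine Set.mem_iUnion₂.2 ⟨fun i : Fin n => digit β x i, ?_, ?_, ?_⟩
    · rw [hF, Set.Finite.mem_toFinset]
      exact ⟨x, hx.1, hx.2, fun i => rfl⟩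
    · have h1 : 0 ≤ (Tb β)^[n] x / β ^ n := div_nonneg hT.1 hβn.le
      linarith
    · have h2 : (Tb β)^[n] x / β ^ n < 1 / β ^ n := by
        apply div_lt_div_of_pos_right hT.2 hβn
      linarith
  have h1 : (1:ENNReal) ≤ F.card * ENNReal.ofReal (1 / β ^ n) := by
    calc (1:ENNReal) = MeasureTheory.volume (Set.Ico (0:ℝ) 1) := by simp
    _ ≤ MeasureTheory.volume (⋃ w ∈ F, Set.Ico (valw β w) (valw β w + 1 / β ^ n)) :=
        MeasureTheory.measure_mono hcover
    _ ≤ ∑ w ∈ F, MeasureTheory.volume (Set.Ico (valw β w) (valw β w + 1 / β ^ n)) :=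
        MeasureTheory.measure_biUnion_finset_le F _
    _ = ∑ w ∈ F, ENNReal.ofReal (1 / β ^ n) := by
        refine Finset.sum_congr rfl fun w _ => ?_
        rw [Real.volume_Ico]
        congr 1
        ring
    _ = F.card * ENNReal.ofReal (1 / β ^ n) := by rw [Finset.sum_const, nsmul_eq_mul]
  have h2 : (1:ℝ) ≤ (F.card : ℝ) * (1 / β ^ n) := by
    rw [← ENNReal.ofReal_natCast, ← ENNReal.ofReal_mul (by positivity)] at h1
    exact ENNReal.one_le_ofReal.1 h1
  have hcard : (SigmaB β n).ncard = F.card := Set.ncard_eq_toFinset_card _ hfin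
  rw [hcard]
  rw [mul_one_div, le_div_iff₀ hβn, one_mul] at h2
  exact h2

lemma recur (hβ : 1 < β) (n : ℕ) :
    ((SigmaB β (n+1)).ncard : ℝ) ≤ β ^ (n+1) + ((SigmaB β n).ncard : ℝ) := by
  classical
  have hβ0 : (0:ℝ) < β := lt_trans zero_lt_one hβ
  have hfinN := finite_SigmaB hβ n
  have hfinS := finite_SigmaB hβ (n+1)
  set F := hfinN.toFinset with hF
  set G := hfinS.toFinset with hGdef
  set D : (Fin n → ℕ) → Set ℕ := fun w => {ε | Fin.snoc w ε ∈ SigmaB β (n+1)} with hD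
  have hbddD : ∀ w, BddAbove (D w) := by
    intro w
    refine ⟨(⌊β⌋).toNat, ?_⟩
    rintro ε ⟨x, hx0, hx1, hw⟩
    have h := hw (Fin.last n)
    rw [Fin.snoc_last] at h
    rw [← h]
    exact digit_le hβ0 ⟨hx0, hx1⟩ _
  set M : (Fin n → ℕ) → ℕ := fun w => sSup (D w) with hM
  have hinit : ∀ w' ∈ G, Fin.init w' ∈ F := by
    intro w' hw'
    rw [hGdef, Set.Finite.mem_toFinset] at hw'
    obtain ⟨x, hx0, hx1, hw⟩ := hw'
    rw [hF, Set.Finite.mem_toFinset]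
    refine ⟨x, hx0, hx1, fun i => ?_⟩
    have h := hw i.castSucc
    rw [Fin.coe_castSucc] at h
    exact h
  have hsplit : G.card = ∑ w ∈ F, (G.filter (fun w' => Fin.init w' = w)).card :=
    Finset.card_eq_sum_card_fiberwise hinit
  have hfiber : ∀ w, (G.filter (fun w' => Fin.init w' = w)).card ≤ M w + 1 := by
    intro w
    have h : (G.filter (fun w' => Fin.init w' = w)).card ≤ (Finset.range (M w + 1)).card := by
      apply Finset.card_le_card_of_injOn (fun w' => w' (Fin.last n))
      · intro w' hw'
        rw [Finset.mem_coe, Finset.mem_filter] at hw'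
        obtain ⟨hw'G, hw'init⟩ := hw'
        rw [Finset.mem_coe, Finset.mem_range, Nat.lt_succ_iff]
        apply le_csSup (hbddD w)
        show Fin.snoc w (w' (Fin.last n)) ∈ SigmaB β (n+1)
        rw [← hw'init, Fin.snoc_init_self]
        rw [hGdef, Set.Finite.mem_toFinset] at hw'G
        exact hw'G
      · intro a ha b hb hab
        rw [Finset.mem_coe, Finset.mem_filter] at ha hb
        have hab' : a (Fin.last n) = b (Fin.last n) := hab
        have h1 : a = Fin.snoc (Fin.init a) (a (Fin.last n)) := (Fin.snoc_init_self a).symm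
        rw [h1, ha.2, hab', ← hb.2, Fin.snoc_init_self]
    simpa using h
  have hmem : ∀ w ∈ F, M w ∈ D w := by
    intro w hw
    apply Nat.sSup_mem ?_ (hbddD w)
    rw [hF, Set.Finite.mem_toFinset] at hw
    obtain ⟨x, hx0, hx1, hwdig⟩ := hw
    refine ⟨digit β x n, x, hx0, hx1, fun i => ?_⟩
    refine Fin.lastCases ?_ (fun j => ?_) i
    · rw [Fin.snoc_last, Fin.val_last]
    · rw [Fin.snoc_castSucc, Fin.coe_castSucc]
      exact hwdig j
  set C : (Fin n → ℕ) → Set ℝ :=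
    fun w => {y | (0 ≤ y ∧ y < 1) ∧ ∀ i : Fin n, digit β y i = w i} with hC
  set J : (Fin n → ℕ) → Set ℝ :=
    fun w => Set.Ico (valw β w) (valw β w + (M w : ℝ) / β ^ (n+1)) with hJ
  have hJC : ∀ w ∈ F, J w ⊆ C w := by
    intro w hw y hy
    obtain ⟨x, hx0, hx1, hwdig⟩ := hmem w hw
    have hx : x ∈ Set.Ico (0:ℝ) 1 := ⟨hx0, hx1⟩
    have hdig : ∀ i : Fin n, digit β x i = w i := fun i => by
      have h := hwdig i.castSucc
      rwa [Fin.coe_castSucc, Fin.snoc_castSucc] at h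
    have hdign : digit β x n = M w := by
      have h := hwdig (Fin.last n)
      rwa [Fin.snoc_last, Fin.val_last] at h
    have hMle : (M w : ℝ) ≤ β * (Tb β)^[n] x := by
      have h := digit_real hβ0 hx n
      rw [hdign] at h
      rw [h]
      exact Int.floor_le _
    have hβn : (0:ℝ) < β ^ n := pow_pos hβ0 n
    set t : ℝ := (y - valw β w) * β ^ n with htdef
    have hyval : y = valw β (fun i : Fin n => digit β x i) + t / β ^ n := by
      rw [valw_congr (fun i => hdig i), htdef]
      field_simp
      ring
    have ht0 : 0 ≤ t := by
      have h1 := hy.1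
      nlinarith [hy.1]
    have htle : t ≤ (Tb β)^[n] x := by
      have h2 := hy.2
      have ht1 : t < (M w : ℝ) / β := by
        have h3 : y - valw β w < (M w:ℝ) / β ^ (n+1) := by linarith [hy.2]
        calc t = (y - valw β w) * β ^ n := htdef
        _ < ((M w:ℝ) / β ^ (n+1)) * β ^ n := by nlinarith
        _ = (M w:ℝ) / β := by
            rw [pow_succ]
            field_simp
      have ht2 : (M w : ℝ) / β ≤ (Tb β)^[n] x := by
        rw [div_le_iff₀ hβ0]
        linarith [hMle]
      linarith
    obtain ⟨hyx, hy0, hydig, _⟩ := star hβ n x t hx ht0 htle y hyval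
    refine ⟨⟨hy0, lt_of_le_of_lt hyx hx1⟩, fun i => ?_⟩
    rw [hydig i i.isLt, hdig i]
  have hCdisj : (↑F : Set (Fin n → ℕ)).PairwiseDisjoint C := by
    intro w _ w' _ hne
    rw [Function.onFun, Set.disjoint_left]
    intro y hyw hyw'
    apply hne
    funext i
    exact (hyw.2 i).symm.trans (hyw'.2 i)
  have hJdisj : (↑F : Set (Fin n → ℕ)).PairwiseDisjoint J := by
    intro w hw w' hw' hne
    exact (hCdisj hw hw' hne).mono (hJC w (Finset.mem_coe.1 hw)) (hJC w' (Finset.mem_coe.1 hw'))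
  have hsum : ∑ w ∈ F, MeasureTheory.volume (J w) ≤ 1 := by
    rw [← MeasureTheory.measure_biUnion_finset hJdisj (fun w _ => measurableSet_Ico)]
    calc MeasureTheory.volume (⋃ w ∈ F, J w) ≤ MeasureTheory.volume (Set.Ico (0:ℝ) 1) := by
          apply MeasureTheory.measure_mono
          refine Set.iUnion₂_subset fun w hw => fun y hy => ?_
          exact ⟨(hJC w hw hy).1.1, (hJC w hw hy).1.2⟩
    _ = 1 := by simp
  have hsumreal : ∑ w ∈ F, (M w : ℝ) / β ^ (n+1) ≤ 1 := by
    have heq : ∑ w ∈ F, MeasureTheory.volume (J w)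
        = ENNReal.ofReal (∑ w ∈ F, (M w : ℝ) / β ^ (n+1)) := by
      rw [ENNReal.ofReal_sum_of_nonneg (fun w _ => by positivity)]
      refine Finset.sum_congr rfl fun w _ => ?_
      rw [hJ]
      rw [Real.volume_Ico]
      congr 1
      ring
    rw [heq] at hsum
    exact ENNReal.ofReal_le_one.1 hsum
  have hMsum : ∑ w ∈ F, (M w : ℝ) ≤ β ^ (n+1) := by
    have hβn1 : (0:ℝ) < β ^ (n+1) := pow_pos hβ0 (n+1)
    rw [← Finset.sum_div, div_le_one hβn1] at hsumreal
    exact hsumreal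
  have hcardS : (SigmaB β (n+1)).ncard = G.card := Set.ncard_eq_toFinset_card _ hfinS
  have hcardN : (SigmaB β n).ncard = F.card := Set.ncard_eq_toFinset_card _ hfinN
  rw [hcardS, hcardN]
  calc (G.card : ℝ) = ∑ w ∈ F, ((G.filter (fun w' => Fin.init w' = w)).card : ℝ) := by
        exact_mod_cast congrArg (Nat.cast : ℕ → ℝ) hsplit
  _ ≤ ∑ w ∈ F, ((M w : ℝ) + 1) := by
        refine Finset.sum_le_sum fun w _ => ?_
        exact_mod_cast hfiber w
  _ = (∑ w ∈ F, (M w : ℝ)) + F.card := by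
        rw [Finset.sum_add_distrib, Finset.sum_const, nsmul_eq_mul, mul_one]
  _ ≤ β ^ (n+1) + F.card := by linarith

lemma ncard_zero (β : ℝ) : (SigmaB β 0).ncard = 1 := by
  have h : SigmaB β 0 = Set.univ :=
    Set.eq_univ_of_forall fun w => ⟨0, le_rfl, zero_lt_one, fun i => i.elim0⟩
  rw [h, Set.ncard_univ]
  exact Nat.card_unique

end CardAdm

theorem card_admissible_words (β : ℝ) (hβ : 1 < β) (n : ℕ) (hn : 1 ≤ n) :
    (SigmaB β n).Finite ∧ β ^ n ≤ ((SigmaB β n).ncard : ℝ) ∧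
      ((SigmaB β n).ncard : ℝ) ≤ β ^ (n + 1) / (β - 1) := by
  refine ⟨CardAdm.finite_SigmaB hβ n, CardAdm.lower hβ n, ?_⟩
  have key : ∀ m : ℕ, ((SigmaB β m).ncard : ℝ) ≤ ∑ k ∈ Finset.range (m+1), β ^ k := by
    intro m
    induction m with
    | zero => simp [CardAdm.ncard_zero]
    | succ m ih =>
      calc ((SigmaB β (m+1)).ncard : ℝ) ≤ β ^ (m+1) + ((SigmaB β m).ncard : ℝ) :=
            CardAdm.recur hβ m
      _ ≤ β ^ (m+1) + ∑ k ∈ Finset.range (m+1), β ^ k := by linarith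
      _ = ∑ k ∈ Finset.range (m+2), β ^ k := by
        rw [Finset.sum_range_succ (fun k => β ^ k) (m+1)]
        ring
  have hgeom : ∑ k ∈ Finset.range (n+1), β ^ k = (β ^ (n+1) - 1) / (β - 1) :=
    geom_sum_eq hβ.ne' (n+1)
  have h1 : (0:ℝ) < β - 1 := by linarith
  calc ((SigmaB β n).ncard : ℝ) ≤ ∑ k ∈ Finset.range (n+1), β ^ k := key n
  _ = (β ^ (n+1) - 1) / (β - 1) := hgeom
  _ ≤ β ^ (n+1) / (β - 1) := by
      apply (div_le_div_iff_of_pos_right h1).2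
      linarith
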